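/- arXiv:2105.04140 — 5 statements merged into one kernel-verified Lean document; each statement's English description precedes it below -/
import Mathlib

section
/- Let (σ_k)_{k≥1} be nonnegative reals, (α_k)_{k≥1} reals, τ > 0, and let ζ_k = exp(σ_k √τ Z_k + (α_k − σ_k²/2) τ), where (Z_k) are independent standard Gaussian random variables. If there exists ε > 0 such that sup_{k≥1} [ (1+ε) σ_k √(2 log k) + (α_k − σ_k²/2) √τ ] < ∞, then ℙ( sup_{k≥1} ζ_k < ∞ ) = 1; that is, almost surely the diagonal operator with eigenvalues (ζ_k) is a bounded operator, so the diagonal equation defines a stochastic flow of bounded operators (sufficiency part of Proposition 4.1(ii)). -/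
open MeasureTheory ProbabilityTheory Filter

lemma bddAbove_range_of_eventually_le {f : ℕ → ℝ} {C : ℝ}
    (h : ∀ᶠ k in atTop, f k ≤ C) : BddAbove (Set.range f) := by
  obtain ⟨N, hN⟩ := eventually_atTop.mp h
  refine ⟨max C (((Finset.range (N + 1)).image f).max' (by simp)), ?_⟩
  rintro x ⟨k, rfl⟩
  rcases le_or_gt N k with hk | hk
  · exact le_max_of_le_left (hN k hk)
  · exact le_max_of_le_right (Finset.le_max' _ _
      (Finset.mem_image_of_mem f (Finset.mem_range.mpr (by omega))))

lemma gaussian_tail_bound {b : ℝ} (hb : 0 ≤ b) :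
    gaussianReal 0 1 (Set.Ici b) ≤ ENNReal.ofReal (Real.exp (-(b ^ 2) / 2)) := by
  rw [gaussianReal_apply 0 one_ne_zero]
  have hpt : ∀ x ∈ Set.Ici b,
      gaussianPDF 0 1 x ≤ ENNReal.ofReal (Real.exp (-(b ^ 2) / 2)) * gaussianPDF b 1 x := by
    intro x hx
    rw [gaussianPDF, gaussianPDF, ← ENNReal.ofReal_mul (Real.exp_nonneg _)]
    apply ENNReal.ofReal_le_ofReal
    simp only [gaussianPDFReal, NNReal.coe_one, mul_one, sub_zero]
    rw [mul_comm (Real.exp _) _, mul_assoc, ← Real.exp_add]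
    apply mul_le_mul_of_nonneg_left _ (by positivity)
    apply Real.exp_le_exp.mpr
    have hbx : b * b ≤ b * x := mul_le_mul_of_nonneg_left hx hb
    nlinarith
  calc ∫⁻ x in Set.Ici b, gaussianPDF 0 1 x
      ≤ ∫⁻ x in Set.Ici b, ENNReal.ofReal (Real.exp (-(b ^ 2) / 2)) * gaussianPDF b 1 x :=
        setLIntegral_mono ((measurable_gaussianPDF b 1).const_mul _) hpt
    _ ≤ ∫⁻ x, ENNReal.ofReal (Real.exp (-(b ^ 2) / 2)) * gaussianPDF b 1 x :=
        setLIntegral_le_lintegral _ _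
    _ = ENNReal.ofReal (Real.exp (-(b ^ 2) / 2)) := by
        rw [lintegral_const_mul _ (measurable_gaussianPDF b 1),
          lintegral_gaussianPDF_eq_one b one_ne_zero, mul_one]

/-- Sufficiency part of Proposition 4.1(ii): if for some `ε > 0` the sequence
`(1+ε) σ k √(2 log k) + (α k − σ k²/2) √τ` is bounded above, then almost surely the
eigenvalues `ζ k = exp(σ k √τ Z k + (α k − σ k²/2) τ)` form a bounded sequence, i.e. the
diagonal operator is bounded and the equation defines a stochastic flow. -/
theorem stmt1 {Ω : Type*} [MeasurableSpace Ω] (P : Measure Ω) [IsProbabilityMeasure P]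
    (Z : ℕ → Ω → ℝ) (hZmeas : ∀ k, Measurable (Z k))
    (hindep : iIndepFun Z P)
    (hgauss : ∀ k, Measure.map (Z k) P = gaussianReal 0 1)
    (σ α : ℕ → ℝ) (hσ : ∀ k, 0 ≤ σ k) (τ : ℝ) (hτ : 0 < τ)
    (ζ : ℕ → Ω → ℝ)
    (hζ : ∀ k ω, ζ k ω =
      Real.exp (σ k * Real.sqrt τ * Z k ω + (α k - σ k ^ 2 / 2) * τ))
    (hsup : ∃ ε : ℝ, 0 < ε ∧
      BddAbove (Set.range fun k : ℕ =>
        (1 + ε) * σ k * Real.sqrt (2 * Real.log k) + (α k - σ k ^ 2 / 2) * Real.sqrt τ)) :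
    P {ω | BddAbove (Set.range fun k => ζ k ω)} = 1 := by
  obtain ⟨ε, hε, M, hM⟩ := hsup
  have hM' : ∀ k : ℕ,
      (1 + ε) * σ k * Real.sqrt (2 * Real.log k) + (α k - σ k ^ 2 / 2) * Real.sqrt τ ≤ M :=
    fun k => hM (Set.mem_range_self k)
  set a : ℕ → ℝ := fun k => (1 + ε) * Real.sqrt (2 * Real.log k) with ha_def
  have hlog : ∀ k : ℕ, (0 : ℝ) ≤ 2 * Real.log k := by
    intro k
    rcases Nat.eq_zero_or_pos k with h | h
    · simp [h]
    · have : (1 : ℝ) ≤ k := by exact_mod_cast h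
      have := Real.log_nonneg this
      linarith
  have ha_nonneg : ∀ k, 0 ≤ a k := fun k => mul_nonneg (by linarith) (Real.sqrt_nonneg _)
  have hexp : ∀ k : ℕ, -(a k) ^ 2 / 2 = -((1 + ε) ^ 2 * Real.log k) := by
    intro k
    have hs : (Real.sqrt (2 * Real.log k)) ^ 2 = 2 * Real.log k := Real.sq_sqrt (hlog k)
    simp only [ha_def]
    rw [mul_pow, hs]
    ring
  set A : ℕ → Set Ω := fun k => Z k ⁻¹' Set.Ici (a k) with hA_def
  have hPA : ∀ k, P (A k) ≤ ENNReal.ofReal (Real.exp (-((1 + ε) ^ 2 * Real.log k))) := by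
    intro k
    rw [← hexp k]
    have : P (A k) = (Measure.map (Z k) P) (Set.Ici (a k)) :=
      (Measure.map_apply (hZmeas k) measurableSet_Ici).symm
    rw [this, hgauss k]
    exact gaussian_tail_bound (ha_nonneg k)
  have hp : (1 : ℝ) < (1 + ε) ^ 2 := by nlinarith
  have hsumm : Summable (fun k : ℕ => Real.exp (-((1 + ε) ^ 2 * Real.log k))) := by
    rw [← summable_nat_add_iff 1]
    have h0 : Summable (fun n : ℕ => (n : ℝ) ^ (-(1 + ε) ^ 2)) :=
      Real.summable_nat_rpow.mpr (by linarith)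
    have h1 : Summable (fun n : ℕ => ((n + 1 : ℕ) : ℝ) ^ (-(1 + ε) ^ 2)) :=
      (summable_nat_add_iff 1).mpr h0
    refine h1.congr fun n => ?_
    rw [Real.rpow_def_of_pos (by positivity)]
    push_cast
    ring_nf
  have hsum_ne_top : ∑' k, P (A k) ≠ ⊤ := by
    refine ne_top_of_le_ne_top ?_ (ENNReal.tsum_le_tsum hPA)
    rw [← ENNReal.ofReal_tsum_of_nonneg (fun k => Real.exp_nonneg _) hsumm]
    exact ENNReal.ofReal_ne_top
  have h0 : P (limsup A atTop) = 0 := measure_limsup_atTop_eq_zero hsum_ne_top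
  have hsub : (limsup A atTop)ᶜ ⊆ {ω | BddAbove (Set.range fun k => ζ k ω)} := by
    intro ω hω
    rw [Set.mem_compl_iff, mem_limsup_iff_frequently_mem, not_frequently] at hω
    apply bddAbove_range_of_eventually_le (C := Real.exp (Real.sqrt τ * M))
    filter_upwards [hω] with k hk
    rw [hζ k ω]
    apply Real.exp_le_exp.mpr
    have hz : Z k ω < a k := by
      simpa [hA_def, not_le] using hk
    rw [ha_def] at hz
    have hst : (0 : ℝ) ≤ Real.sqrt τ := Real.sqrt_nonneg τ
    have hτs : Real.sqrt τ * Real.sqrt τ = τ := Real.mul_self_sqrt hτ.le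
    have h1 : σ k * Real.sqrt τ * Z k ω
        ≤ σ k * Real.sqrt τ * ((1 + ε) * Real.sqrt (2 * Real.log k)) :=
      mul_le_mul_of_nonneg_left hz.le (mul_nonneg (hσ k) hst)
    have h2 : Real.sqrt τ * ((1 + ε) * σ k * Real.sqrt (2 * Real.log k)
          + (α k - σ k ^ 2 / 2) * Real.sqrt τ) ≤ Real.sqrt τ * M :=
      mul_le_mul_of_nonneg_left (hM' k) hst
    have h3 : (α k - σ k ^ 2 / 2) * τ = (α k - σ k ^ 2 / 2) * (Real.sqrt τ * Real.sqrt τ) := by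
      rw [hτs]
    nlinarith [h1, h2, h3]
  have hc : P ({ω | BddAbove (Set.range fun k => ζ k ω)}ᶜ) = 0 :=
    measure_mono_null (Set.compl_subset_comm.mp hsub) h0
  have h1 : (1 : ENNReal) ≤ P {ω | BddAbove (Set.range fun k => ζ k ω)} := by
    have hu := measure_union_le (μ := P) {ω | BddAbove (Set.range fun k => ζ k ω)}
      {ω | BddAbove (Set.range fun k => ζ k ω)}ᶜ
    rw [Set.union_compl_self, measure_univ, hc, add_zero] at hu
    exact hu
  exact le_antisymm prob_le_one h1
end

section
/- Let (σ_k)_{k≥1} be a sequence of nonnegative real numbers such that for every t > 0 one has sup_{k≥1} ( σ_k √(2 log k) − (σ_k²/2) √t ) < ∞. Then no real number c with 0 < c < ∞ is a cluster (accumulation) point of the sequence (σ_k); i.e. every accumulation point of (σ_k) in [0, +∞] is either 0 or +∞. -/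
open Filter

/-- Proposition 4.3(i): if for every `t > 0` the sequence
`σ k √(2 log k) − (σ k²/2) √t` is bounded above, then no real `c` with `0 < c < ∞` is an
accumulation (cluster) point of the sequence `(σ k)`; that is, every accumulation point of
`(σ k)` in `[0, +∞]` is either `0` or `+∞`. -/
theorem stmt2 (σ : ℕ → ℝ) (hσ : ∀ k, 0 ≤ σ k)
    (h : ∀ t : ℝ, 0 < t →
      BddAbove (Set.range fun k : ℕ =>
        σ k * Real.sqrt (2 * Real.log k) - σ k ^ 2 / 2 * Real.sqrt t)) :
    ∀ c : ℝ, 0 < c → ¬ MapClusterPt c Filter.atTop σ := by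
  intro c hc hcl
  obtain ⟨M, hM⟩ := h 1 one_pos
  have hfreq : ∃ᶠ k in atTop, σ k ∈ Set.Ioo (c/2) (2*c) :=
    (mapClusterPt_iff_frequently.mp hcl) _ (Ioo_mem_nhds (by linarith) (by linarith))
  have hlog : Tendsto (fun k : ℕ => 2 * Real.log k) atTop atTop :=
    Tendsto.const_mul_atTop two_pos
      (Real.tendsto_log_atTop.comp tendsto_natCast_atTop_atTop)
  set B : ℝ := 2*(M + 2*c^2 + 1)/c with hB
  have hev : ∀ᶠ k : ℕ in atTop, B ≤ Real.sqrt (2 * Real.log k) := by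
    filter_upwards [hlog.eventually_ge_atTop ((max B 0)^2)] with k hk
    calc B ≤ max B 0 := le_max_left _ _
      _ ≤ Real.sqrt (2 * Real.log k) := (Real.le_sqrt (le_max_right _ _) ((sq_nonneg _).trans hk)).mpr hk
  obtain ⟨k, hk1, hk2⟩ := (hfreq.and_eventually hev).exists
  have hMk : σ k * Real.sqrt (2 * Real.log k) - σ k ^ 2 / 2 * Real.sqrt 1 ≤ M :=
    hM ⟨k, rfl⟩
  rw [Real.sqrt_one] at hMk
  set s := Real.sqrt (2 * Real.log (k : ℝ)) with hs
  have hs0 : 0 ≤ s := Real.sqrt_nonneg _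
  have e1 : (c/2)*s ≤ σ k * s := mul_le_mul_of_nonneg_right hk1.1.le hs0
  have e2 : (c/2)*(2*(M + 2*c^2 + 1)/c) ≤ (c/2)*s :=
    mul_le_mul_of_nonneg_left hk2 (by linarith)
  have hcB : (c/2)*(2*(M + 2*c^2 + 1)/c) = M + 2*c^2 + 1 := by
    field_simp
  have e3 : σ k ^ 2 ≤ 4*c^2 := by nlinarith [hσ k, hk1.2]
  linarith
end

section
/- Let (σ_k)_{k≥1} be a sequence of nonnegative real numbers such that for every t > 0 one has sup_{k≥1} ( σ_k √(2 log k) − (σ_k²/2) √t ) < ∞. If σ_k → 0 as k → ∞, then sup_{k≥1} σ_k √(log k) < ∞. -/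
open Filter

/-- First (deterministic) assertion of Proposition 4.3(ii): if for every `t > 0` the
sequence `σ k √(2 log k) − (σ k²/2) √t` is bounded above and `σ k → 0`, then the sequence
`σ k √(log k)` is bounded above. -/
theorem stmt3 (σ : ℕ → ℝ) (hσ : ∀ k, 0 ≤ σ k)
    (h : ∀ t : ℝ, 0 < t →
      BddAbove (Set.range fun k : ℕ =>
        σ k * Real.sqrt (2 * Real.log k) - σ k ^ 2 / 2 * Real.sqrt t))
    (hσ0 : Tendsto σ atTop (nhds 0)) :
    BddAbove (Set.range fun k : ℕ => σ k * Real.sqrt (Real.log k)) := by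
  obtain ⟨M, hM⟩ := h 1 one_pos
  obtain ⟨B, hB⟩ := hσ0.bddAbove_range
  refine ⟨M + B ^ 2 / 2, ?_⟩
  rintro x ⟨k, rfl⟩
  have h1 : σ k * Real.sqrt (2 * Real.log k) - σ k ^ 2 / 2 * Real.sqrt 1 ≤ M :=
    hM ⟨k, rfl⟩
  rw [Real.sqrt_one, mul_one] at h1
  have hlog : 0 ≤ Real.log k := by
    rcases Nat.eq_zero_or_pos k with hk | hk
    · simp [hk]
    · exact Real.log_nonneg (by exact_mod_cast hk)
  have hsq : Real.sqrt (Real.log k) ≤ Real.sqrt (2 * Real.log k) :=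
    Real.sqrt_le_sqrt (by linarith)
  have hBk : σ k ≤ B := hB ⟨k, rfl⟩
  calc σ k * Real.sqrt (Real.log k)
      ≤ σ k * Real.sqrt (2 * Real.log k) :=
        mul_le_mul_of_nonneg_left hsq (hσ k)
    _ ≤ M + σ k ^ 2 / 2 := by linarith
    _ ≤ M + B ^ 2 / 2 := by nlinarith [hσ k]
end

section
/- Let (σ_k)_{k≥1} be a sequence of nonnegative real numbers such that for every t > 0 one has sup_{k≥1} ( σ_k √(2 log k) − (σ_k²/2) √t ) < ∞. If σ_k → +∞ as k → ∞, then σ_k / √(log k) → +∞ as k → ∞. -/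
open Filter

/-- First (deterministic) assertion of Proposition 4.3(iii): if for every `t > 0` the
sequence `σ k √(2 log k) − (σ k²/2) √t` is bounded above and `σ k → +∞`, then
`σ k / √(log k) → +∞`. -/
theorem stmt5 (σ : ℕ → ℝ) (hσ : ∀ k, 0 ≤ σ k)
    (h : ∀ t : ℝ, 0 < t →
      BddAbove (Set.range fun k : ℕ =>
        σ k * Real.sqrt (2 * Real.log k) - σ k ^ 2 / 2 * Real.sqrt t))
    (hσinf : Tendsto σ atTop atTop) :
    Tendsto (fun k : ℕ => σ k / Real.sqrt (Real.log k)) atTop atTop := by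
  rw [tendsto_atTop]
  intro M
  set M' : ℝ := max M 1 with hM'
  have hM'1 : (1:ℝ) ≤ M' := le_max_right _ _
  have hMM' : M ≤ M' := le_max_left _ _
  set v : ℝ := M' + 1 with hv
  have hv2 : (2:ℝ) ≤ v := by linarith
  have hv0 : (0:ℝ) < v := by linarith
  have hsq2 : (0:ℝ) < Real.sqrt 2 := by positivity
  set u : ℝ := 2 * Real.sqrt 2 / v with hu
  have hu0 : (0:ℝ) < u := by positivity
  have huv : u * v = 2 * Real.sqrt 2 := by
    rw [hu]; field_simp
  obtain ⟨C, hC⟩ := h (u ^ 2) (by positivity)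
  have hCk : ∀ k : ℕ, σ k * Real.sqrt (2 * Real.log k) - σ k ^ 2 / 2 * u ≤ C := by
    intro k
    have := hC (Set.mem_range_self k)
    rwa [Real.sqrt_sq hu0.le] at this
  set C' : ℝ := max C 0 with hC'def
  have hC'0 : (0:ℝ) ≤ C' := le_max_right _ _
  have hCC' : C ≤ C' := le_max_left _ _
  have h1 : ∀ᶠ k : ℕ in atTop, 1 ≤ σ k := hσinf.eventually_ge_atTop 1
  have hlogtend : Tendsto (fun k : ℕ => Real.log k) atTop atTop :=
    Real.tendsto_log_atTop.comp tendsto_natCast_atTop_atTop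
  have h2 : ∀ᶠ k : ℕ in atTop, max 1 ((C' * v / Real.sqrt 2) ^ 2) ≤ Real.log k :=
    hlogtend.eventually_ge_atTop _
  filter_upwards [h1, h2] with k ha hl
  have hl1 : (1:ℝ) ≤ Real.log k := le_trans (le_max_left _ _) hl
  set s : ℝ := Real.sqrt (Real.log k) with hs
  have hs1 : (1:ℝ) ≤ s := by
    rw [hs, show (1:ℝ) = Real.sqrt 1 by simp]
    exact Real.sqrt_le_sqrt hl1
  have hs0 : (0:ℝ) < s := lt_of_lt_of_le one_pos hs1
  have hsge : C' * v ≤ Real.sqrt 2 * s := by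
    have hl2 : (C' * v / Real.sqrt 2) ^ 2 ≤ Real.log k := le_trans (le_max_right _ _) hl
    have h3 : C' * v / Real.sqrt 2 ≤ s := by
      rw [hs]
      calc C' * v / Real.sqrt 2 = Real.sqrt ((C' * v / Real.sqrt 2) ^ 2) :=
            (Real.sqrt_sq (by positivity)).symm
        _ ≤ _ := Real.sqrt_le_sqrt hl2
    rw [div_le_iff₀ hsq2] at h3
    linarith
  have hkey : σ k * (Real.sqrt 2 * s) ≤ C' + σ k ^ 2 * u / 2 := by
    have hk := hCk k
    have heq : Real.sqrt (2 * Real.log k) = Real.sqrt 2 * s := by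
      rw [hs, Real.sqrt_mul (by norm_num)]
    rw [heq] at hk
    nlinarith
  have ha0 : (0:ℝ) < σ k := lt_of_lt_of_le one_pos ha
  have step1 : Real.sqrt 2 * s ≤ C' + σ k * u / 2 := by
    have h4 : σ k * (Real.sqrt 2 * s) ≤ σ k * (C' + σ k * u / 2) := by nlinarith
    exact le_of_mul_le_mul_left h4 ha0
  have step2 : Real.sqrt 2 * (s * v) ≤ Real.sqrt 2 * (s + σ k) := by
    nlinarith [mul_le_mul_of_nonneg_right step1 hv0.le]
  have step3 : s * v ≤ s + σ k := le_of_mul_le_mul_left step2 hsq2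
  rw [le_div_iff₀ hs0]
  nlinarith [mul_le_mul_of_nonneg_right hMM' hs0.le]
end

section
/- Let (σ_k)_{k≥1} be nonnegative reals with σ_k / √(log k) → +∞ as k → ∞, let (Z_k) be independent standard Gaussian random variables, and let t > 0. Then ℙ( Σ_{k≥1} exp( σ_k √t Z_k − σ_k² t / 2 ) < ∞ ) = 1; i.e. almost surely the diagonal operator with eigenvalues ζ_k = exp(σ_k √t Z_k − σ_k² t/2) has finite trace (is trace class). -/
open MeasureTheory ProbabilityTheory Filter
open scoped ENNReal NNReal

lemma gauss_pdf_mul (a x : ℝ) :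
    gaussianPDFReal 0 1 x * Real.exp (a * x) = Real.exp (a ^ 2 / 2) * gaussianPDFReal a 1 x := by
  simp only [gaussianPDFReal, NNReal.coe_one, mul_one, sub_zero]
  rw [mul_assoc, ← Real.exp_add, mul_comm (Real.exp (a ^ 2 / 2)), mul_assoc, ← Real.exp_add]
  congr 1
  ring_nf

lemma lintegral_exp_gaussian (a : ℝ) :
    ∫⁻ x, ENNReal.ofReal (Real.exp (a * x)) ∂(gaussianReal 0 1) =
      ENNReal.ofReal (Real.exp (a ^ 2 / 2)) := by
  rw [gaussianReal_of_var_ne_zero 0 one_ne_zero,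
    lintegral_withDensity_eq_lintegral_mul _ (measurable_gaussianPDF 0 1)
      (((measurable_id'.const_mul a).exp).ennreal_ofReal)]
  have h : ∀ x, (gaussianPDF 0 1 * fun x => ENNReal.ofReal (Real.exp (a * x))) x
      = ENNReal.ofReal (Real.exp (a ^ 2 / 2)) * gaussianPDF a 1 x := by
    intro x
    simp only [Pi.mul_apply, gaussianPDF]
    rw [← ENNReal.ofReal_mul (gaussianPDFReal_nonneg 0 1 x), gauss_pdf_mul,
      ENNReal.ofReal_mul (Real.exp_nonneg _)]
  simp_rw [h]
  rw [lintegral_const_mul _ (measurable_gaussianPDF a 1),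
    lintegral_gaussianPDF_eq_one a one_ne_zero, mul_one]

/-- Trace-class assertion of Proposition 4.3(iii): if `σ k / √(log k) → +∞`, then almost
surely `∑ k exp(σ k √t Z k − σ k² t/2) < ∞`, i.e. the diagonal flow operator with these
eigenvalues is trace class. -/
theorem stmt6 {Ω : Type*} [MeasurableSpace Ω] (P : Measure Ω) [IsProbabilityMeasure P]
    (σ : ℕ → ℝ) (hσ : ∀ k, 0 ≤ σ k)
    (hσinf : Tendsto (fun k : ℕ => σ k / Real.sqrt (Real.log k)) atTop atTop)
    (Z : ℕ → Ω → ℝ) (hZmeas : ∀ k, Measurable (Z k))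
    (hindep : iIndepFun Z P)
    (hgauss : ∀ k, Measure.map (Z k) P = gaussianReal 0 1)
    (t : ℝ) (ht : 0 < t) :
    P {ω | Summable fun k => Real.exp (σ k * Real.sqrt t * Z k ω - σ k ^ 2 * t / 2)} = 1 := by
  have hfmeas : ∀ k, Measurable (fun ω =>
      Real.exp (σ k * Real.sqrt t * Z k ω - σ k ^ 2 * t / 2)) :=
    fun k => (((hZmeas k).const_mul _).sub_const _).exp
  -- the basic mgf computation
  have hb : ∀ (k : ℕ) (b c : ℝ), ∫⁻ ω, ENNReal.ofReal (Real.exp (b * Z k ω - c)) ∂P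
      = ENNReal.ofReal (Real.exp (b ^ 2 / 2 - c)) := by
    intro k b c
    have hg : Measurable (fun x : ℝ => ENNReal.ofReal (Real.exp (b * x - c))) :=
      ((measurable_id'.const_mul b).sub_const c).exp.ennreal_ofReal
    have hmap : ∫⁻ ω, ENNReal.ofReal (Real.exp (b * Z k ω - c)) ∂P
        = ∫⁻ x, ENNReal.ofReal (Real.exp (b * x - c)) ∂(gaussianReal 0 1) := by
      rw [← hgauss k, lintegral_map hg (hZmeas k)]
    rw [hmap]
    have hsplit : ∀ x : ℝ, Real.exp (b * x - c) = Real.exp (-c) * Real.exp (b * x) := by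
      intro x; rw [← Real.exp_add]; ring_nf
    simp_rw [hsplit, ENNReal.ofReal_mul (Real.exp_nonneg _)]
    rw [lintegral_const_mul _ ((measurable_id'.const_mul b).exp.ennreal_ofReal),
      lintegral_exp_gaussian, ← ENNReal.ofReal_mul (Real.exp_nonneg _), ← Real.exp_add]
    congr 1
    ring_nf
  -- key bound on each term
  have key : ∀ k, ∫⁻ ω, ENNReal.ofReal
        (min (Real.exp (σ k * Real.sqrt t * Z k ω - σ k ^ 2 * t / 2)) 1) ∂P
      ≤ ENNReal.ofReal (Real.exp (-(σ k ^ 2 * t / 8))) := by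
    intro k
    have h1 : ∀ ω, min (Real.exp (σ k * Real.sqrt t * Z k ω - σ k ^ 2 * t / 2)) 1
        ≤ Real.exp ((σ k * Real.sqrt t / 2) * Z k ω - σ k ^ 2 * t / 4) := by
      intro ω
      have he : (σ k * Real.sqrt t / 2) * Z k ω - σ k ^ 2 * t / 4
          = (σ k * Real.sqrt t * Z k ω - σ k ^ 2 * t / 2) / 2 := by ring
      rw [he]
      rcases le_or_gt (σ k * Real.sqrt t * Z k ω - σ k ^ 2 * t / 2) 0 with h | h
      · exact le_trans (min_le_left _ _) (Real.exp_le_exp.2 (by linarith))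
      · refine le_trans (min_le_right _ _) ?_
        rw [← Real.exp_zero]
        exact Real.exp_le_exp.2 (by linarith)
    calc ∫⁻ ω, ENNReal.ofReal
          (min (Real.exp (σ k * Real.sqrt t * Z k ω - σ k ^ 2 * t / 2)) 1) ∂P
        ≤ ∫⁻ ω, ENNReal.ofReal
            (Real.exp ((σ k * Real.sqrt t / 2) * Z k ω - σ k ^ 2 * t / 4)) ∂P :=
          lintegral_mono fun ω => ENNReal.ofReal_le_ofReal (h1 ω)
      _ = ENNReal.ofReal (Real.exp ((σ k * Real.sqrt t / 2) ^ 2 / 2 - σ k ^ 2 * t / 4)) :=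
          hb k _ _
      _ = ENNReal.ofReal (Real.exp (-(σ k ^ 2 * t / 8))) := by
          congr 2
          have h2 : (σ k * Real.sqrt t / 2) ^ 2 = σ k ^ 2 * t / 4 := by
            rw [div_pow, mul_pow, Real.sq_sqrt ht.le]; ring
          rw [h2]; ring
  -- summability of the bounds
  have hsum : Summable (fun k : ℕ => Real.exp (-(σ k ^ 2 * t / 8))) := by
    obtain ⟨N, hN⟩ := eventually_atTop.1 (hσinf.eventually_ge_atTop (Real.sqrt (16 / t)))
    have hsq : ∀ m : ℕ, N ≤ m → 3 ≤ m →
        Real.exp (-(σ m ^ 2 * t / 8)) ≤ 1 / (m : ℝ) ^ 2 := by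
      intro m hm h3
      have hm1 : (1 : ℝ) < m := by exact_mod_cast lt_of_lt_of_le (by norm_num) h3
      have hlog : 0 < Real.log m := Real.log_pos hm1
      have h2 : Real.sqrt (16 / t) * Real.sqrt (Real.log m) ≤ σ m := by
        rw [← le_div_iff₀ (Real.sqrt_pos.2 hlog)]
        exact hN m hm
      have h3' : 16 / t * Real.log m ≤ σ m ^ 2 := by
        calc 16 / t * Real.log m
            = (Real.sqrt (16 / t) * Real.sqrt (Real.log m)) ^ 2 := by
              rw [mul_pow, Real.sq_sqrt (by positivity), Real.sq_sqrt hlog.le]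
          _ ≤ σ m ^ 2 := by
              have hnn : 0 ≤ Real.sqrt (16 / t) * Real.sqrt (Real.log m) := by positivity
              nlinarith
      rw [div_mul_eq_mul_div, div_le_iff₀ ht] at h3'
      have h4 : 2 * Real.log m ≤ σ m ^ 2 * t / 8 := by linarith
      calc Real.exp (-(σ m ^ 2 * t / 8)) ≤ Real.exp (-(2 * Real.log m)) :=
            Real.exp_le_exp.2 (by linarith)
        _ = 1 / (m : ℝ) ^ 2 := by
            rw [show -(2 * Real.log (m : ℝ)) = Real.log (1 / (m : ℝ) ^ 2) by
              rw [one_div, Real.log_inv, Real.log_pow]; push_cast; ring]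
            exact Real.exp_log (by positivity)
    rw [← summable_nat_add_iff (N + 3)]
    refine Summable.of_nonneg_of_le (fun k => Real.exp_nonneg _) (fun k => ?_)
      ((summable_nat_add_iff (N + 3)).2 (Real.summable_one_div_nat_pow.2 one_lt_two))
    exact hsq (k + (N + 3)) (by omega) (by omega)
  -- a.e. summability of the truncated series
  have hmeas2 : ∀ k, Measurable (fun ω => ENNReal.ofReal
      (min (Real.exp (σ k * Real.sqrt t * Z k ω - σ k ^ 2 * t / 2)) 1)) :=
    fun k => ((hfmeas k).min measurable_const).ennreal_ofReal
  have htot : ∫⁻ ω, ∑' k, ENNReal.ofReal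
      (min (Real.exp (σ k * Real.sqrt t * Z k ω - σ k ^ 2 * t / 2)) 1) ∂P ≠ ⊤ := by
    rw [lintegral_tsum (fun k => (hmeas2 k).aemeasurable)]
    refine ne_top_of_le_ne_top ?_ (ENNReal.tsum_le_tsum key)
    rw [← ENNReal.ofReal_tsum_of_nonneg (fun k => Real.exp_nonneg _) hsum]
    exact ENNReal.ofReal_ne_top
  have hae2 : ∀ᵐ ω ∂P, Summable fun k =>
      Real.exp (σ k * Real.sqrt t * Z k ω - σ k ^ 2 * t / 2) := by
    have hlt := ae_lt_top' (AEMeasurable.ennreal_tsum (fun k => (hmeas2 k).aemeasurable)) htot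
    filter_upwards [hlt] with ω hω
    have hconv : Summable (fun k => (ENNReal.ofReal
        (min (Real.exp (σ k * Real.sqrt t * Z k ω - σ k ^ 2 * t / 2)) 1)).toReal) :=
      ENNReal.summable_toReal hω.ne
    have hmin : Summable (fun k =>
        min (Real.exp (σ k * Real.sqrt t * Z k ω - σ k ^ 2 * t / 2)) 1) :=
      hconv.congr fun k =>
        ENNReal.toReal_ofReal (le_min (Real.exp_pos _).le zero_le_one)
    have h0 : Tendsto (fun k =>
        min (Real.exp (σ k * Real.sqrt t * Z k ω - σ k ^ 2 * t / 2)) 1) atTop (nhds 0) :=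
      hmin.tendsto_atTop_zero
    obtain ⟨N, hN2⟩ := eventually_atTop.1 (h0.eventually_lt_const one_pos)
    have hflt : ∀ k, N ≤ k →
        Real.exp (σ k * Real.sqrt t * Z k ω - σ k ^ 2 * t / 2) ≤ 1 := by
      intro k hk
      by_contra h
      push_neg at h
      have := hN2 k hk
      rw [min_eq_right h.le] at this
      exact lt_irrefl _ this
    exact (summable_nat_add_iff N).1 (((summable_nat_add_iff N).2 hmin).congr
      (fun n => min_eq_left (hflt (n + N) (Nat.le_add_left N n))))
  -- convert a.e. statement to probability one
  have h0 : P {ω | Summable fun k =>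
      Real.exp (σ k * Real.sqrt t * Z k ω - σ k ^ 2 * t / 2)}ᶜ = 0 := by
    have := ae_iff.1 hae2
    simpa [Set.compl_setOf] using this
  refine le_antisymm prob_le_one ?_
  calc (1 : ℝ≥0∞) = P Set.univ := measure_univ.symm
    _ ≤ P {ω | Summable fun k =>
          Real.exp (σ k * Real.sqrt t * Z k ω - σ k ^ 2 * t / 2)}
        + P {ω | Summable fun k =>
          Real.exp (σ k * Real.sqrt t * Z k ω - σ k ^ 2 * t / 2)}ᶜ := by
        rw [← Set.union_compl_self {ω | Summable fun k =>
          Real.exp (σ k * Real.sqrt t * Z k ω - σ k ^ 2 * t / 2)}]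
        exact measure_union_le _ _
    _ = P {ω | Summable fun k =>
          Real.exp (σ k * Real.sqrt t * Z k ω - σ k ^ 2 * t / 2)} := by
        rw [h0, add_zero]
end
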